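/- Let a and μ be nonnegative integers with (p−1)/2 < a ≤ p−1, and let v := v_p(2μ+1) be the p-adic valuation of 2μ+1 (so v = v_p(μ + 1/2)). Then the element A_{1/2}(a+μp)/φ(A_{1/2}(μ)) of Q lies in [p^{1+v}]_q·R. -/

import Mathlib

/- Setting (following Dwork-type q-congruences / q-hypergeometric papers):
`p` is an odd prime, `R = ℤ_p[[q−1]]` is implemented as `PowerSeries ℤ_[p]`, the power-series
variable `PowerSeries.X` standing for `q − 1`. -/

noncomputable section
open PowerSeries
namespace QDwork

variable (p : ℕ) [Fact p.Prime]

/-- `R = ℤ_p[[q−1]]`. -/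
abbrev R : Type := PowerSeries ℤ_[p]

/-- `q = 1 + (q−1) ∈ R`. -/
def qq : R p := 1 + PowerSeries.X

/-- `q^a = Σ_{i≥0} binom(a,i)(q−1)^i ∈ R` for `a ∈ ℤ_p`, using the p-adically interpolated
binomial coefficients `Ring.choose` (`ℤ_p` is a binomial ring). -/
def qpow (a : ℤ_[p]) : R p := PowerSeries.mk fun i => Ring.choose a i

/-- The q-number `[a]_q = (q^a−1)/(q−1) = Σ_{i≥1} binom(a,i)(q−1)^{i−1} ∈ R` for `a ∈ ℤ_p`. -/
def qnum (a : ℤ_[p]) : R p := PowerSeries.mk fun i => Ring.choose a (i + 1)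

/-- The q-number `[n]_q = 1 + q + ⋯ + q^{n−1} ∈ R` of a natural number `n`. -/
def qnat (n : ℕ) : R p := ∑ i ∈ Finset.range n, qq p ^ i

/-- `1/2 ∈ ℤ_p` (recall `p` is odd, so `2` is a unit of `ℤ_p`). -/
def half : ℤ_[p] := Ring.inverse 2

/-- The Frobenius endomorphism `φ` of `R = ℤ_p[[q−1]]`: the ring endomorphism fixing `ℤ_p`
with `φ(q) = q^p`, i.e. the substitution `f(q−1) ↦ f(q^p−1)` (legitimate since `q^p−1` has
zero constant term), described here through its coefficients. -/
def phiR (f : R p) : R p :=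
  PowerSeries.mk fun n => ∑ i ∈ Finset.range (n + 1),
    PowerSeries.coeff i f * PowerSeries.coeff n ((qq p ^ p - 1) ^ i)

/-- `Q = Frac(R)`. -/
abbrev Q : Type := FractionRing (R p)

/-- The canonical injection `R → Q`. -/
def ι : R p →+* Q p := algebraMap (R p) (Q p)

/-- `q ∈ Q`. -/
def qQ : Q p := ι p (qq p)

/-- The extension of the Frobenius `φ` to `Q = Frac(R)` (computed via a choice of a fraction
representation `x = r/s`, `φ(x) = φ(r)/φ(s)`). -/
def phiQ (x : Q p) : Q p :=
  ι p (phiR p (IsLocalization.sec (nonZeroDivisors (R p)) x).1) /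
    ι p (phiR p ((IsLocalization.sec (nonZeroDivisors (R p)) x).2 : R p))

/-- `C_θ(n) = ∏_{ν=0}^{n−1} [θ+ν]_q ∈ R`. -/
def Cq (θ : ℤ_[p]) (n : ℕ) : R p := ∏ ν ∈ Finset.range n, qnum p (θ + (ν : ℤ_[p]))

/-- `A_{1/2}(n) = C_{1/2}(n)/C_1(n) ∈ Q`. -/
def Ahalf (n : ℕ) : Q p := ι p (Cq p (half p) n) / ι p (Cq p 1 n)

/-! ### Auxiliary lemmas -/

section Aux

lemma coeff_qnum (θ : ℤ_[p]) (n : ℕ) :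
    PowerSeries.coeff n (qnum p θ) = Ring.choose θ (n + 1) := coeff_mk _ _

lemma coeff_qpow (θ : ℤ_[p]) (n : ℕ) :
    PowerSeries.coeff n (qpow p θ) = Ring.choose θ n := coeff_mk _ _

lemma constantCoeff_qnum (θ : ℤ_[p]) : constantCoeff (qnum p θ) = θ := by
  rw [← coeff_zero_eq_constantCoeff, coeff_qnum, Ring.choose_one_right]

lemma qnat_mul_X (m : ℕ) : qnat p m * X = qq p ^ m - 1 := by
  have := geom_sum_mul (qq p) m
  simpa [qnat, qq] using this

lemma coeff_qq_pow (m n : ℕ) :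
    PowerSeries.coeff n (qq p ^ m) = (m.choose n : ℤ_[p]) := by
  induction m generalizing n with
  | zero =>
    simp [coeff_zero_eq_constantCoeff_apply, Nat.choose]
    rcases n with _ | n <;> simp [Nat.choose, coeff_one]
  | succ m ih =>
    have : qq p ^ (m + 1) = qq p ^ m + qq p ^ m * X := by
      rw [pow_succ]; unfold qq; ring
    rw [this, map_add]
    rcases n with _ | n
    · simp [coeff_zero_mul_X, ih]
    · rw [coeff_succ_mul_X, ih, ih, ← Nat.cast_add, Nat.choose_succ_succ' m n]
      push_cast; ring

lemma qpow_natCast (m : ℕ) : qpow p (m : ℤ_[p]) = qq p ^ m := by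
  ext n
  rw [coeff_qpow, coeff_qq_pow, Ring.choose_natCast]

lemma qnum_mul_X (θ : ℤ_[p]) : qnum p θ * X = qpow p θ - 1 := by
  ext n
  rcases n with _ | n
  · rw [coeff_zero_mul_X, map_sub, coeff_zero_eq_constantCoeff]
    rw [← coeff_zero_eq_constantCoeff_apply, coeff_qpow, Ring.choose_zero_right, map_one]
    ring
  · rw [coeff_succ_mul_X, coeff_qnum, map_sub, coeff_qpow, coeff_one,
      if_neg (Nat.succ_ne_zero n)]
    ring

lemma E_eq : qq p ^ p - 1 = qnat p p * X := (qnat_mul_X p p).symm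

lemma coeff_E_pow_eq_zero {n i : ℕ} (h : n < i) :
    PowerSeries.coeff n ((qq p ^ p - 1) ^ i) = 0 := by
  rw [E_eq, mul_pow, coeff_mul_X_pow', if_neg (by omega)]

lemma coeff_phiR (f : R p) (n : ℕ) :
    PowerSeries.coeff n (phiR p f) =
      ∑ i ∈ Finset.range (n + 1),
        PowerSeries.coeff i f * PowerSeries.coeff n ((qq p ^ p - 1) ^ i) :=
  coeff_mk _ _

lemma coeff_phiR_congr {u w : R p} (n : ℕ) (h : ∀ i ≤ n,
    PowerSeries.coeff i u = PowerSeries.coeff i w) :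
    PowerSeries.coeff n (phiR p u) = PowerSeries.coeff n (phiR p w) := by
  rw [coeff_phiR, coeff_phiR]
  refine Finset.sum_congr rfl fun i hi => ?_
  rw [h i (by simpa [Nat.lt_succ_iff] using hi)]

lemma coeff_aeval (P : Polynomial ℤ_[p]) (n : ℕ) :
    PowerSeries.coeff n (Polynomial.aeval (qq p ^ p - 1) P : R p) =
      ∑ i ∈ Finset.range (n + 1),
        P.coeff i * PowerSeries.coeff n ((qq p ^ p - 1) ^ i) := by
  induction P using Polynomial.induction_on' with
  | add P Q hP hQ =>
    rw [map_add, map_add, hP, hQ, ← Finset.sum_add_distrib]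
    refine Finset.sum_congr rfl fun i _ => ?_
    rw [Polynomial.coeff_add, add_mul]
  | monomial i a =>
    rw [Polynomial.aeval_monomial]
    have halg : algebraMap ℤ_[p] (R p) a = PowerSeries.C a := rfl
    rw [halg, coeff_C_mul]
    have : ∀ j ∈ Finset.range (n + 1),
        (Polynomial.monomial i a).coeff j * PowerSeries.coeff n ((qq p ^ p - 1) ^ j) =
        if j = i then a * PowerSeries.coeff n ((qq p ^ p - 1) ^ i) else 0 := by
      intro j _
      by_cases hji : j = i
      · simp [hji]
      · rw [Polynomial.coeff_monomial, if_neg (fun h => hji h.symm), zero_mul, if_neg hji]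
    rw [Finset.sum_congr rfl this, Finset.sum_ite_eq' (Finset.range (n + 1))]
    by_cases hin : i ∈ Finset.range (n + 1)
    · rw [if_pos hin]
    · rw [if_neg hin, coeff_E_pow_eq_zero p (by simpa [Nat.lt_succ_iff] using hin), mul_zero]

lemma coeff_phiR_coe (P : Polynomial ℤ_[p]) (n : ℕ) :
    PowerSeries.coeff n (phiR p (P : R p)) =
      PowerSeries.coeff n (Polynomial.aeval (qq p ^ p - 1) P : R p) := by
  rw [coeff_phiR, coeff_aeval]
  refine Finset.sum_congr rfl fun i _ => ?_
  rw [Polynomial.coeff_coe]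

lemma phiR_mul (f g : R p) : phiR p (f * g) = phiR p f * phiR p g := by
  ext n
  set P := trunc (n + 1) f with hP
  set Q := trunc (n + 1) g with hQ
  have hfP : ∀ i ≤ n, PowerSeries.coeff i (f * g) =
      PowerSeries.coeff i ((P : R p) * (Q : R p)) := by
    intro i hi
    have := trunc_trunc_mul_trunc (n := n + 1) f g
    have h2 := congrArg (fun P => Polynomial.coeff P i) this
    simp only [coeff_trunc, if_pos (Nat.lt_succ_of_le hi)] at h2
    exact h2.symm
  have key : PowerSeries.coeff n (phiR p (f * g)) =
      PowerSeries.coeff n (phiR p ((P * Q : Polynomial ℤ_[p]) : R p)) := by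
    apply coeff_phiR_congr
    intro i hi
    rw [hfP i hi, Polynomial.coe_mul]
  rw [key, coeff_phiR_coe, map_mul, PowerSeries.coeff_mul, PowerSeries.coeff_mul]
  refine Finset.sum_congr rfl fun ab hab => ?_
  have ha : ab.1 ≤ n := Finset.HasAntidiagonal.antidiagonal.fst_le hab
  have hb : ab.2 ≤ n := Finset.HasAntidiagonal.antidiagonal.snd_le hab
  have e1 : PowerSeries.coeff ab.1 (Polynomial.aeval (qq p ^ p - 1) P : R p) =
      PowerSeries.coeff ab.1 (phiR p f) := by
    rw [← coeff_phiR_coe]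
    apply coeff_phiR_congr
    intro i hi
    rw [Polynomial.coeff_coe, hP, coeff_trunc, if_pos (by omega)]
  have e2 : PowerSeries.coeff ab.2 (Polynomial.aeval (qq p ^ p - 1) Q : R p) =
      PowerSeries.coeff ab.2 (phiR p g) := by
    rw [← coeff_phiR_coe]
    apply coeff_phiR_congr
    intro i hi
    rw [Polynomial.coeff_coe, hQ, coeff_trunc, if_pos (by omega)]
  rw [e1, e2]

lemma phiR_one : phiR p 1 = 1 := by
  ext n
  rw [coeff_phiR]
  have : ∀ i ∈ Finset.range (n + 1),
      PowerSeries.coeff i (1 : R p) * PowerSeries.coeff n ((qq p ^ p - 1) ^ i) =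
      if i = 0 then PowerSeries.coeff n ((1 : R p)) else 0 := by
    intro i _
    rw [coeff_one]
    by_cases hi : i = 0 <;> simp [hi]
  rw [Finset.sum_congr rfl this, Finset.sum_ite_eq' (Finset.range (n + 1))]
  simp

lemma phiR_add (f g : R p) : phiR p (f + g) = phiR p f + phiR p g := by
  ext n
  rw [map_add, coeff_phiR, coeff_phiR, coeff_phiR, ← Finset.sum_add_distrib]
  refine Finset.sum_congr rfl fun i _ => ?_
  rw [map_add, add_mul]

lemma phiR_zero : phiR p 0 = 0 := by
  ext n; rw [coeff_phiR]; simp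

/-- `φ` as a ring homomorphism. -/
def Φ : R p →+* R p where
  toFun := phiR p
  map_one' := phiR_one p
  map_mul' := phiR_mul p
  map_zero' := phiR_zero p
  map_add' := phiR_add p

lemma Φ_apply (f : R p) : Φ p f = phiR p f := rfl

lemma phiR_X : phiR p X = qq p ^ p - 1 := by
  ext n
  rw [coeff_phiR]
  have : ∀ i ∈ Finset.range (n + 1),
      PowerSeries.coeff i (X : R p) * PowerSeries.coeff n ((qq p ^ p - 1) ^ i) =
      if i = 1 then PowerSeries.coeff n ((qq p ^ p - 1) ^ 1) else 0 := by
    intro i _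
    rw [coeff_X]
    by_cases hi : i = 1 <;> simp [hi]
  rw [Finset.sum_congr rfl this, Finset.sum_ite_eq' (Finset.range (n + 1))]
  by_cases hn : 1 ∈ Finset.range (n + 1)
  · rw [if_pos hn, pow_one]
  · have hn0 : n = 0 := by simpa [Nat.lt_succ_iff] using hn
    rw [if_neg hn, hn0]
    rw [coeff_zero_eq_constantCoeff, E_eq]
    simp

lemma phiR_qq : phiR p (qq p) = qq p ^ p := by
  have h1 : phiR p (qq p) = phiR p 1 + phiR p X := by rw [← phiR_add]; rfl
  rw [h1, phiR_one, phiR_X]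
  ring

lemma phiR_pow (f : R p) (m : ℕ) : phiR p (f ^ m) = phiR p f ^ m := map_pow (Φ p) f m

lemma phiR_qpow (θ : ℤ_[p]) : phiR p (qpow p θ) = qpow p ((p : ℤ_[p]) * θ) := by
  ext n
  have key : (fun θ : ℤ_[p] => ∑ i ∈ Finset.range (n + 1),
        Ring.choose θ i * PowerSeries.coeff n ((qq p ^ p - 1) ^ i)) =
      (fun θ : ℤ_[p] => Ring.choose ((p : ℤ_[p]) * θ) n) := by
    refine DenseRange.equalizer PadicInt.denseRange_natCast ?_ ?_ ?_
    · exact continuous_finset_sum _ fun i _ =>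
        (PadicInt.continuous_choose i).mul continuous_const
    · exact (PadicInt.continuous_choose n).comp (continuous_const.mul continuous_id)
    · funext m
      have h1 : ∑ i ∈ Finset.range (n + 1),
          Ring.choose ((m : ℤ_[p])) i * PowerSeries.coeff n ((qq p ^ p - 1) ^ i) =
          PowerSeries.coeff n (phiR p (qpow p (m : ℤ_[p]))) := by
        rw [coeff_phiR]
        refine Finset.sum_congr rfl fun i _ => ?_
        rw [coeff_qpow]
      have h2 : phiR p (qpow p (m : ℤ_[p])) = qq p ^ (p * m) := by
        rw [qpow_natCast, phiR_pow, phiR_qq, ← pow_mul]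
      simp only [Function.comp_apply]
      rw [h1, h2, coeff_qq_pow, ← Nat.cast_mul, Ring.choose_natCast]
  rw [coeff_phiR]
  simp only [coeff_qpow]
  exact congrFun key θ

lemma qnum_p_mul (θ : ℤ_[p]) :
    qnum p ((p : ℤ_[p]) * θ) = qnat p p * phiR p (qnum p θ) := by
  apply mul_right_cancel₀ (X_ne_zero : (X : R p) ≠ 0)
  calc qnum p ((p : ℤ_[p]) * θ) * X = qpow p ((p : ℤ_[p]) * θ) - 1 := qnum_mul_X p _
    _ = phiR p (qpow p θ) - phiR p 1 := by rw [phiR_qpow, phiR_one]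
    _ = phiR p (qpow p θ - 1) := (map_sub (Φ p) _ _).symm
    _ = phiR p (qnum p θ * X) := by rw [qnum_mul_X]
    _ = phiR p (qnum p θ) * (qq p ^ p - 1) := by rw [phiR_mul, phiR_X]
    _ = qnat p p * phiR p (qnum p θ) * X := by rw [E_eq]; ring

lemma qnat_p_mul (m : ℕ) : qnat p (p * m) = qnat p p * phiR p (qnat p m) := by
  apply mul_right_cancel₀ (X_ne_zero : (X : R p) ≠ 0)
  calc qnat p (p * m) * X = qq p ^ (p * m) - 1 := qnat_mul_X p _
    _ = phiR p (qq p ^ m) - phiR p 1 := by rw [phiR_pow, phiR_qq, ← pow_mul, phiR_one]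
    _ = phiR p (qq p ^ m - 1) := (map_sub (Φ p) _ _).symm
    _ = phiR p (qnat p m * X) := by rw [qnat_mul_X]
    _ = phiR p (qnat p m) * (qq p ^ p - 1) := by rw [phiR_mul, phiR_X]
    _ = qnat p p * phiR p (qnat p m) * X := by rw [E_eq]; ring

lemma qnat_one : qnat p 1 = 1 := by simp [qnat]

lemma qnum_p_pow_mul (k : ℕ) (θ : ℤ_[p]) :
    ∃ s : R p, qnum p ((p : ℤ_[p]) ^ k * θ) = qnat p (p ^ k) * s := by
  induction k with
  | zero => exact ⟨qnum p θ, by simp [qnat_one]⟩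
  | succ k ih =>
    obtain ⟨s, hs⟩ := ih
    refine ⟨phiR p s, ?_⟩
    have h1 : (p : ℤ_[p]) ^ (k + 1) * θ = (p : ℤ_[p]) * ((p : ℤ_[p]) ^ k * θ) := by ring
    rw [h1, qnum_p_mul, hs, phiR_mul, pow_succ, mul_comm (p ^ k) p, qnat_p_mul]
    ring

lemma constantCoeff_qnat (m : ℕ) : constantCoeff (qnat p m) = (m : ℤ_[p]) := by
  rw [qnat, map_sum]
  have : ∀ i ∈ Finset.range m, constantCoeff (qq p ^ i) = 1 := by
    intro i _
    rw [map_pow]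
    have : constantCoeff (qq p) = 1 := by simp [qq]
    rw [this, one_pow]
  rw [Finset.sum_congr rfl this]
  simp

lemma constantCoeff_phiR (f : R p) :
    constantCoeff (phiR p f) = constantCoeff f := by
  rw [← coeff_zero_eq_constantCoeff_apply, ← coeff_zero_eq_constantCoeff_apply, coeff_phiR]
  simp

lemma phiR_injective : Function.Injective (phiR p) := by
  classical
  have key : ∀ f : R p, phiR p f = 0 → f = 0 := by
    intro f hf
    by_contra hne
    have hex : ∃ n, PowerSeries.coeff n f ≠ 0 := by
      by_contra h
      push_neg at h
      exact hne (PowerSeries.ext fun n => by rw [h n, map_zero])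
    let m := Nat.find hex
    have hm : PowerSeries.coeff m f ≠ 0 := Nat.find_spec hex
    have hmin : ∀ i < m, PowerSeries.coeff i f = 0 := by
      intro i hi
      by_contra h
      exact absurd hi (not_lt.mpr (Nat.find_le h))
    have hc : PowerSeries.coeff m (phiR p f) =
        PowerSeries.coeff m f * (p : ℤ_[p]) ^ m := by
      rw [coeff_phiR]
      rw [Finset.sum_eq_single_of_mem m (Finset.self_mem_range_succ m)]
      · congr 1
        rw [E_eq, mul_pow, coeff_mul_X_pow', if_pos (le_refl m), Nat.sub_self,
          coeff_zero_eq_constantCoeff, map_pow, constantCoeff_qnat]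
      · intro i hi hne'
        have : i < m := by
          have := Finset.mem_range.mp hi; omega
        rw [hmin i this, zero_mul]
    rw [hf, map_zero] at hc
    have hp0 : ((p : ℤ_[p]) : ℤ_[p]) ^ m ≠ 0 := by
      apply pow_ne_zero
      exact_mod_cast (Nat.cast_ne_zero (R := ℤ_[p])).mpr (Fact.out : p.Prime).ne_zero
    exact hm (by
      rcases mul_eq_zero.mp hc.symm with h | h
      · exact h
      · exact absurd h hp0)
  intro f g h
  have hsub : phiR p (f - g) = 0 := by
    have hms := map_sub (Φ p) f g
    simp only [Φ_apply] at hms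
    rw [hms, h, sub_self]
  exact sub_eq_zero.mp (key _ hsub)

lemma isUnit_natCast_of_not_dvd {k : ℕ} (h : ¬ p ∣ k) : IsUnit (k : ℤ_[p]) := by
  have h1 : ‖(k : ℤ_[p])‖ ≤ 1 := PadicInt.norm_le_one _
  have h2 : ¬ ‖(k : ℤ_[p])‖ < 1 := by
    intro hlt
    have hlt' : ‖((k : ℤ) : ℤ_[p])‖ < 1 := by push_cast; exact hlt
    rw [PadicInt.norm_int_lt_one_iff_dvd] at hlt'
    exact h (by exact_mod_cast hlt')
  rw [PadicInt.isUnit_iff]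
  exact le_antisymm h1 (not_lt.mp h2)

lemma two_mul_half (hp : p ≠ 2) : (2 : ℤ_[p]) * half p = 1 := by
  have h2u : IsUnit (2 : ℤ_[p]) := by
    have := isUnit_natCast_of_not_dvd p (k := 2) (by
      intro hdvd
      exact hp ((Nat.prime_dvd_prime_iff_eq (Fact.out : p.Prime) Nat.prime_two).mp hdvd))
    exact_mod_cast this
  exact Ring.mul_inverse_cancel _ h2u

lemma qnum_ne_zero {θ : ℤ_[p]} (h : θ ≠ 0) : qnum p θ ≠ 0 := fun h0 =>
  h (by rw [← constantCoeff_qnum p θ, h0, map_zero])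

lemma phiR_ne_zero {f : R p} (h : f ≠ 0) : phiR p f ≠ 0 := fun h0 =>
  h (phiR_injective p (by rw [h0, phiR_zero]))

lemma qnat_p_ne_zero : qnat p p ≠ 0 := fun h0 => by
  have := constantCoeff_qnat p p
  rw [h0, map_zero] at this
  exact (Nat.cast_ne_zero (R := ℤ_[p])).mpr (Fact.out : p.Prime).ne_zero this.symm

lemma ι_injective : Function.Injective (ι p) := IsFractionRing.injective (R p) (Q p)

lemma ι_ne_zero {f : R p} (h : f ≠ 0) : ι p f ≠ 0 := fun h0 =>
  h (ι_injective p (by rw [h0, map_zero]))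

lemma phiQ_div (f g : R p) (hg : g ≠ 0) :
    phiQ p (ι p f / ι p g) = ι p (phiR p f) / ι p (phiR p g) := by
  set z := ι p f / ι p g with hz
  have hsec := IsLocalization.sec_spec (nonZeroDivisors (R p)) z
  set rs := IsLocalization.sec (nonZeroDivisors (R p)) z with hrs
  have hsec' : z * ι p (rs.2 : R p) = ι p rs.1 := hsec
  have hs0 : (rs.2 : R p) ≠ 0 := nonZeroDivisors.ne_zero rs.2.2
  have hgQ : ι p g ≠ 0 := ι_ne_zero p hg
  have hRident : f * (rs.2 : R p) = rs.1 * g := by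
    apply ι_injective p
    rw [map_mul, map_mul]
    have hf : ι p f = z * ι p g := by rw [hz, div_mul_cancel₀ _ hgQ]
    rw [hf]
    calc z * ι p g * ι p (rs.2 : R p) = (z * ι p (rs.2 : R p)) * ι p g := by ring
      _ = ι p rs.1 * ι p g := by rw [hsec']
  have hphi : phiR p f * phiR p (rs.2 : R p) = phiR p rs.1 * phiR p g := by
    have hc := congrArg (phiR p) hRident
    rw [phiR_mul, phiR_mul] at hc
    exact hc
  have hφs : ι p (phiR p (rs.2 : R p)) ≠ 0 := ι_ne_zero p (phiR_ne_zero p hs0)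
  have hφg : ι p (phiR p g) ≠ 0 := ι_ne_zero p (phiR_ne_zero p hg)
  show ι p (phiR p rs.1) / ι p (phiR p (rs.2 : R p)) = _
  rw [div_eq_div_iff hφs hφg, ← map_mul, ← map_mul]
  exact congrArg (ι p) (by linear_combination -hphi)

end Aux

/-- For `(p−1)/2 < a ≤ p−1` and `v = v_p(2μ+1) = v_p(μ+1/2)`, the element
`A_{1/2}(a+μp)/φ(A_{1/2}(μ))` of `Q` lies in `[p^{1+v}]_q·R`. -/
theorem dwork_corollary_2_i (hp : p ≠ 2) (a μ : ℕ)
    (ha1 : (p - 1) / 2 < a) (ha2 : a ≤ p - 1) :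
    ∃ r : R p, Ahalf p (a + μ * p) / phiQ p (Ahalf p μ) =
      ι p (qnat p (p ^ (1 + padicValNat p (2 * μ + 1))) * r) := by
  classical
  have hprime : p.Prime := Fact.out
  have hp2 : 2 ≤ p := hprime.two_le
  have hodd : p % 2 = 1 := (Nat.Prime.eq_two_or_odd hprime).resolve_left hp
  set v := padicValNat p (2 * μ + 1) with hvdef
  set c := (p - 1) / 2 with hcdef
  have hpc : p = 2 * c + 1 := by omega
  have hca : c < a := ha1
  have hap : a < p := by omega
  set N := a + μ * p with hNdef
  have h2half : (2 : ℤ_[p]) * half p = 1 := two_mul_half p hp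
  have hhalfu : IsUnit (half p) := IsUnit.of_mul_eq_one 2 (by linear_combination h2half)
  have hpz : (p : ℤ_[p]) = 2 * (c : ℤ_[p]) + 1 := by exact_mod_cast congrArg (Nat.cast (R := ℤ_[p])) hpc
  -- index sets
  set S1 : Finset ℕ := (Finset.range (μ + 1)).image (fun k => p * k + c) with hS1
  set S2 : Finset ℕ := (Finset.range μ).image (fun k => p * k + 2 * c) with hS2
  have hinj1 : ∀ x ∈ Finset.range (μ + 1), ∀ y ∈ Finset.range (μ + 1),
      p * x + c = p * y + c → x = y := by
    intro x _ y _ h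
    have h' : p * x = p * y := by omega
    exact Nat.eq_of_mul_eq_mul_left (show 0 < p by omega) h'
  have hinj2 : ∀ x ∈ Finset.range μ, ∀ y ∈ Finset.range μ,
      p * x + 2 * c = p * y + 2 * c → x = y := by
    intro x _ y _ h
    have h' : p * x = p * y := by omega
    exact Nat.eq_of_mul_eq_mul_left (show 0 < p by omega) h'
  have hsub1 : S1 ⊆ Finset.range N := by
    intro x hx
    rw [hS1, Finset.mem_image] at hx
    obtain ⟨k, hk, rfl⟩ := hx
    rw [Finset.mem_range] at hk ⊢
    have h1 : p * k ≤ p * μ := Nat.mul_le_mul_left p (by omega)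
    have h2 : p * μ = μ * p := Nat.mul_comm p μ
    omega
  have hsub2 : S2 ⊆ Finset.range N := by
    intro x hx
    rw [hS2, Finset.mem_image] at hx
    obtain ⟨k, hk, rfl⟩ := hx
    rw [Finset.mem_range] at hk ⊢
    have h1 : p * (k + 1) ≤ p * μ := Nat.mul_le_mul_left p (by omega)
    have h2 : p * μ = μ * p := Nat.mul_comm p μ
    have h3 : p * (k + 1) = p * k + p := by ring
    omega
  -- block products
  set Dhalf : R p := ∏ k ∈ Finset.range μ, qnum p ((p : ℤ_[p]) * (half p + (k : ℤ_[p]))) with hDhalf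
  set DoneP : R p := ∏ k ∈ Finset.range μ, qnum p ((p : ℤ_[p]) * (1 + (k : ℤ_[p]))) with hDoneP
  set U1 : R p := ∏ ν ∈ Finset.range N \ S1, qnum p (half p + (ν : ℤ_[p])) with hU1
  set U2 : R p := ∏ ν ∈ Finset.range N \ S2, qnum p (1 + (ν : ℤ_[p])) with hU2
  -- splitting of the numerator
  have hcast1 : ∀ k : ℕ, half p + ((p * k + c : ℕ) : ℤ_[p]) =
      (p : ℤ_[p]) * (half p + (k : ℤ_[p])) := by
    intro k
    push_cast
    rw [hpz]
    linear_combination (-(c : ℤ_[p])) * h2half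
  have hChalf : Cq p (half p) N = Dhalf * qnum p ((p : ℤ_[p]) * (half p + (μ : ℤ_[p]))) * U1 := by
    rw [Cq, ← Finset.prod_sdiff hsub1, hS1, Finset.prod_image hinj1]
    have himg : ∏ k ∈ Finset.range (μ + 1), qnum p (half p + ((p * k + c : ℕ) : ℤ_[p])) =
        Dhalf * qnum p ((p : ℤ_[p]) * (half p + (μ : ℤ_[p]))) := by
      rw [Finset.prod_congr rfl (fun k _ => by rw [hcast1 k]), Finset.prod_range_succ, hDhalf]
    rw [himg, ← hU1]
    ring
  -- splitting of the denominator
  have hcast2 : ∀ k : ℕ, (1 : ℤ_[p]) + ((p * k + 2 * c : ℕ) : ℤ_[p]) =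
      (p : ℤ_[p]) * (1 + (k : ℤ_[p])) := by
    intro k
    push_cast
    rw [hpz]
    ring
  have hCone : Cq p 1 N = DoneP * U2 := by
    rw [Cq, ← Finset.prod_sdiff hsub2, hS2, Finset.prod_image hinj2]
    have himg : ∏ k ∈ Finset.range μ, qnum p ((1 : ℤ_[p]) + ((p * k + 2 * c : ℕ) : ℤ_[p])) =
        DoneP := by
      rw [Finset.prod_congr rfl (fun k _ => by rw [hcast2 k]), hDoneP]
    rw [himg, ← hU2]
    ring
  -- the complement factors are units
  have hU1unit : IsUnit U1 := by
    rw [hU1]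
    refine Finset.prod_induction _ IsUnit (fun _ _ => IsUnit.mul) isUnit_one ?_
    intro ν hν
    rw [Finset.mem_sdiff, Finset.mem_range] at hν
    obtain ⟨hνN, hνS⟩ := hν
    have hnd : ¬ p ∣ (2 * ν + 1) := by
      intro hd
      obtain ⟨m0, hm0⟩ := hd
      rcases Nat.even_or_odd m0 with ⟨t, ht⟩ | ⟨t, ht⟩ <;> subst ht
      · have h1 : p * (t + t) = 2 * (p * t) := by ring
        omega
      · have h1 : p * (2 * t + 1) = 2 * (p * t) + p := by ring
        have hν' : ν = p * t + c := by omega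
        have htμ : t ≤ μ := by
          by_contra hgt
          have h2 : p * (μ + 1) ≤ p * t := Nat.mul_le_mul_left p (by omega)
          have h3 : p * (μ + 1) = μ * p + p := by ring
          omega
        exact hνS (by
          rw [hS1, Finset.mem_image]
          exact ⟨t, Finset.mem_range.mpr (by omega), hν'.symm⟩)
    have humain : IsUnit (half p + (ν : ℤ_[p])) := by
      have h1 : half p + (ν : ℤ_[p]) = ((2 * ν + 1 : ℕ) : ℤ_[p]) * half p := by
        push_cast
        linear_combination (-(ν : ℤ_[p])) * h2half
      rw [h1]
      exact (isUnit_natCast_of_not_dvd p hnd).mul hhalfu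
    rw [PowerSeries.isUnit_iff_constantCoeff, constantCoeff_qnum]
    exact humain
  have hU2unit : IsUnit U2 := by
    rw [hU2]
    refine Finset.prod_induction _ IsUnit (fun _ _ => IsUnit.mul) isUnit_one ?_
    intro ν hν
    rw [Finset.mem_sdiff, Finset.mem_range] at hν
    obtain ⟨hνN, hνS⟩ := hν
    have hnd : ¬ p ∣ (ν + 1) := by
      intro hd
      obtain ⟨m0, hm0⟩ := hd
      have hm0pos : 1 ≤ m0 := by
        rcases Nat.eq_zero_or_pos m0 with h | h
        · rw [h, Nat.mul_zero] at hm0; omega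
        · exact h
      obtain ⟨t, rfl⟩ : ∃ t, m0 = t + 1 := ⟨m0 - 1, by omega⟩
      have h1 : p * (t + 1) = p * t + p := by ring
      have hν' : ν = p * t + 2 * c := by omega
      have htμ : t < μ := by
        by_contra hgt
        have h2 : p * μ ≤ p * t := Nat.mul_le_mul_left p (by omega)
        have h3 : p * μ = μ * p := Nat.mul_comm p μ
        omega
      exact hνS (by
        rw [hS2, Finset.mem_image]
        exact ⟨t, Finset.mem_range.mpr htμ, hν'.symm⟩)
    have h1 : (1 : ℤ_[p]) + (ν : ℤ_[p]) = ((ν + 1 : ℕ) : ℤ_[p]) := by push_cast; ring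
    rw [PowerSeries.isUnit_iff_constantCoeff, constantCoeff_qnum, h1]
    exact isUnit_natCast_of_not_dvd p hnd
  -- Frobenius side
  have hφhalf : qnat p p ^ μ * phiR p (Cq p (half p) μ) = Dhalf := by
    have hmp : phiR p (Cq p (half p) μ) =
        ∏ k ∈ Finset.range μ, phiR p (qnum p (half p + (k : ℤ_[p]))) := by
      rw [Cq]
      exact map_prod (Φ p) (fun k : ℕ => qnum p (half p + (k : ℤ_[p]))) (Finset.range μ)
    rw [hmp, ← Finset.card_range μ, ← Finset.prod_const, Finset.card_range,
      ← Finset.prod_mul_distrib, hDhalf]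
    exact Finset.prod_congr rfl fun k _ => (qnum_p_mul p _).symm
  have hφone : qnat p p ^ μ * phiR p (Cq p 1 μ) = DoneP := by
    have hmp : phiR p (Cq p 1 μ) =
        ∏ k ∈ Finset.range μ, phiR p (qnum p (1 + (k : ℤ_[p]))) := by
      rw [Cq]
      exact map_prod (Φ p) (fun k : ℕ => qnum p (1 + (k : ℤ_[p]))) (Finset.range μ)
    rw [hmp, ← Finset.card_range μ, ← Finset.prod_const, Finset.card_range,
      ← Finset.prod_mul_distrib, hDoneP]
    exact Finset.prod_congr rfl fun k _ => (qnum_p_mul p _).symm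
  -- extraction of [p^{1+v}]
  obtain ⟨m, hm⟩ : (p : ℕ) ^ v ∣ 2 * μ + 1 := pow_padicValNat_dvd
  have hθ : (p : ℤ_[p]) * (half p + (μ : ℤ_[p])) =
      (p : ℤ_[p]) ^ (1 + v) * ((m : ℤ_[p]) * half p) := by
    have h1 : half p + (μ : ℤ_[p]) = ((2 * μ + 1 : ℕ) : ℤ_[p]) * half p := by
      push_cast
      linear_combination (-(μ : ℤ_[p])) * h2half
    rw [h1, hm]
    push_cast
    ring
  obtain ⟨s, hs⟩ := qnum_p_pow_mul p (1 + v) ((m : ℤ_[p]) * half p)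
  have hμterm : qnum p ((p : ℤ_[p]) * (half p + (μ : ℤ_[p]))) = qnat p (p ^ (1 + v)) * s := by
    rw [hθ, hs]
  -- nonzeroness
  have hhalfadd_ne : ∀ k : ℕ, half p + (k : ℤ_[p]) ≠ 0 := by
    intro k h0
    have h1 : (2 : ℤ_[p]) * (half p + (k : ℤ_[p])) = ((2 * k + 1 : ℕ) : ℤ_[p]) := by
      push_cast
      linear_combination h2half
    rw [h0, mul_zero] at h1
    exact (Nat.cast_ne_zero (R := ℤ_[p])).mpr (by omega) h1.symm
  have honeadd_ne : ∀ k : ℕ, (1 : ℤ_[p]) + (k : ℤ_[p]) ≠ 0 := by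
    intro k h0
    have h1 : (1 : ℤ_[p]) + (k : ℤ_[p]) = ((k + 1 : ℕ) : ℤ_[p]) := by push_cast; ring
    rw [h1] at h0
    exact (Nat.cast_ne_zero (R := ℤ_[p])).mpr (by omega) h0
  have hCone_ne : Cq p 1 N ≠ 0 := by
    rw [Cq]
    exact Finset.prod_ne_zero_iff.mpr fun ν _ => qnum_ne_zero p (honeadd_ne ν)
  have hChalfμ_ne : Cq p (half p) μ ≠ 0 := by
    rw [Cq]
    exact Finset.prod_ne_zero_iff.mpr fun ν _ => qnum_ne_zero p (hhalfadd_ne ν)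
  have hConeμ_ne : Cq p 1 μ ≠ 0 := by
    rw [Cq]
    exact Finset.prod_ne_zero_iff.mpr fun ν _ => qnum_ne_zero p (honeadd_ne ν)
  -- the key identity in R
  set u2 := hU2unit.unit with hu2def
  have hu2spec : (u2 : R p) = U2 := hU2unit.unit_spec
  set r : R p := s * U1 * ((u2⁻¹ : (R p)ˣ) : R p) with hr
  have hinv : ((u2⁻¹ : (R p)ˣ) : R p) * U2 = 1 := by
    rw [← hu2spec]
    exact_mod_cast u2.inv_mul
  have key : Cq p (half p) N * (qnat p p ^ μ * phiR p (Cq p 1 μ)) =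
      qnat p (p ^ (1 + v)) * r * (Cq p 1 N * (qnat p p ^ μ * phiR p (Cq p (half p) μ))) := by
    rw [hChalf, hμterm, hφone, hCone, hφhalf, hr]
    linear_combination (-(qnat p (p ^ (1 + v)) * s * U1 * DoneP * Dhalf)) * hinv
  have hgpow : qnat p p ^ μ ≠ 0 := pow_ne_zero _ (qnat_p_ne_zero p)
  have key2 : Cq p (half p) N * phiR p (Cq p 1 μ) =
      qnat p (p ^ (1 + v)) * r * (Cq p 1 N * phiR p (Cq p (half p) μ)) := by
    apply mul_left_cancel₀ hgpow
    linear_combination key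
  -- conclusion in Q
  refine ⟨r, ?_⟩
  have hAN : Ahalf p N = ι p (Cq p (half p) N) / ι p (Cq p 1 N) := rfl
  have hAμ : Ahalf p μ = ι p (Cq p (half p) μ) / ι p (Cq p 1 μ) := rfl
  rw [hAN, hAμ, phiQ_div p _ _ hConeμ_ne]
  have hBQ : ι p (Cq p 1 N) ≠ 0 := ι_ne_zero p hCone_ne
  have hCQ : ι p (phiR p (Cq p (half p) μ)) ≠ 0 :=
    ι_ne_zero p (phiR_ne_zero p hChalfμ_ne)
  have hDQ : ι p (phiR p (Cq p 1 μ)) ≠ 0 :=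
    ι_ne_zero p (phiR_ne_zero p hConeμ_ne)
  have key3 := congrArg (ι p) key2
  simp only [map_mul] at key3
  rw [map_mul]
  field_simp
  linear_combination key3

end QDwork
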